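/- The filtered signal via the ideal FFT filter of a real signal is real: if x : Fin N → ℝ and P ⊆ Fin N is closed under k ↦ (N - k) % N, then every value of T x = IDFT(F(DFT x)) has zero imaginary part. -/
import Mathlib

open Complex in
lemma exp_neg_eq_of_add_mod (N : ℕ) (hN : 0 < N) (a b m : ℕ) (h : (a + b) % N = 0) :
    Complex.exp (-2 * (Real.pi : ℂ) * Complex.I * (a : ℂ) * (m : ℂ) / (N : ℂ)) =
    Complex.exp (2 * (Real.pi : ℂ) * Complex.I * (b : ℂ) * (m : ℂ) / (N : ℂ)) := by
  obtain ⟨t, ht⟩ : ∃ t, a + b = N * t :=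
    ⟨(a + b) / N, (Nat.mul_div_cancel' (Nat.dvd_of_mod_eq_zero h)).symm⟩
  have hNc : (N : ℂ) ≠ 0 := Nat.cast_ne_zero.mpr hN.ne'
  rw [Complex.exp_eq_exp_iff_exists_int]
  refine ⟨-(t * m), ?_⟩
  have ha : (a : ℂ) = N * t - b := by
    have : ((a : ℕ) : ℂ) + b = N * t := by exact_mod_cast congrArg (Nat.cast : ℕ → ℂ) ht
    linear_combination this
  rw [ha]
  push_cast
  field_simp
  ring

theorem filtered_real_signal_is_real (N : ℕ) (hN : 0 < N) (x : Fin N → ℝ)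
    (P : Finset (Fin N))
    (hP : ∀ k : Fin N, k ∈ P → (⟨(N - (k : ℕ)) % N, Nat.mod_lt _ hN⟩ : Fin N) ∈ P)
    (DFT : (Fin N → ℂ) → (Fin N → ℂ))
    (hDFT : ∀ (z : Fin N → ℂ) (k : Fin N), DFT z k = ∑ n : Fin N,
      z n * Complex.exp (-2 * (Real.pi : ℂ) * Complex.I * ((k : ℕ) : ℂ) * ((n : ℕ) : ℂ) / (N : ℂ)))
    (IDFT : (Fin N → ℂ) → (Fin N → ℂ))
    (hIDFT : ∀ (Y : Fin N → ℂ) (n : Fin N), IDFT Y n = (1 / (N : ℂ)) * ∑ k : Fin N,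
      Y k * Complex.exp (2 * (Real.pi : ℂ) * Complex.I * ((k : ℕ) : ℂ) * ((n : ℕ) : ℂ) / (N : ℂ)))
    (F : (Fin N → ℂ) → (Fin N → ℂ))
    (hF : ∀ (Y : (Fin N → ℂ)) (k : Fin N), F Y k = if k ∈ P then Y k else 0) :
    ∀ n : Fin N, (IDFT (F (DFT (fun m => ((x m : ℂ))))) n).im = 0 := by
  intro n
  set σ : Fin N → Fin N := fun k => ⟨(N - (k : ℕ)) % N, Nat.mod_lt _ hN⟩ with hσ
  have hσσ : ∀ k : Fin N, σ (σ k) = k := by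
    intro k
    have hk := k.isLt
    apply Fin.ext
    simp only [hσ]
    rcases Nat.eq_zero_or_pos (k : ℕ) with h0 | h0
    · simp [h0, Nat.mod_self]
    · have h1 : (N - (k : ℕ)) % N = N - (k : ℕ) := Nat.mod_eq_of_lt (by omega)
      rw [h1]
      have : N - (N - (k : ℕ)) = (k : ℕ) := by omega
      rw [this, Nat.mod_eq_of_lt hk]
  have hmod : ∀ k : Fin N, ((σ k : ℕ) + (k : ℕ)) % N = 0 := by
    intro k
    simp only [hσ]
    rcases Nat.eq_zero_or_pos (k : ℕ) with h0 | h0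
    · simp [h0, Nat.mod_self]
    · have h1 : (N - (k : ℕ)) % N = N - (k : ℕ) := Nat.mod_eq_of_lt (by omega)
      rw [h1]
      have : N - (k : ℕ) + (k : ℕ) = N := by omega
      rw [this, Nat.mod_self]
  rw [hIDFT]
  simp only [hF]
  simp only [ite_mul, zero_mul]
  rw [Finset.sum_ite_mem, Finset.univ_inter]
  set S : ℂ := ∑ k ∈ P, DFT (fun m => ((x m : ℂ))) k *
    Complex.exp (2 * (Real.pi : ℂ) * Complex.I * ((k : ℕ) : ℂ) * ((n : ℕ) : ℂ) / (N : ℂ)) with hS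
  have hSconj : (starRingEnd ℂ) S = S := by
    rw [hS, map_sum]
    rw [Finset.sum_nbij' σ σ (fun k hk => hP k hk) (fun k hk => hP k hk)
      (fun k _ => hσσ k) (fun k _ => hσσ k)]
    intro k hk
    rw [map_mul, ← Complex.exp_conj]
    have hconjexp : (starRingEnd ℂ)
        (2 * (Real.pi : ℂ) * Complex.I * ((k : ℕ) : ℂ) * ((n : ℕ) : ℂ) / (N : ℂ)) =
        -2 * (Real.pi : ℂ) * Complex.I * ((k : ℕ) : ℂ) * ((n : ℕ) : ℂ) / (N : ℂ) := by
      simp [map_div₀, Complex.conj_I, map_ofNat]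
    rw [hconjexp]
    have he1 : Complex.exp (-2 * (Real.pi : ℂ) * Complex.I * ((k : ℕ) : ℂ) * ((n : ℕ) : ℂ) / (N : ℂ))
        = Complex.exp (2 * (Real.pi : ℂ) * Complex.I * ((σ k : ℕ) : ℂ) * ((n : ℕ) : ℂ) / (N : ℂ)) :=
      exp_neg_eq_of_add_mod N hN (k : ℕ) (σ k : ℕ) (n : ℕ) (by rw [Nat.add_comm]; exact hmod k)
    have he2 : (starRingEnd ℂ) (DFT (fun m => ((x m : ℂ))) k) = DFT (fun m => ((x m : ℂ))) (σ k) := by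
      rw [hDFT, hDFT, map_sum]
      refine Finset.sum_congr rfl fun m _ => ?_
      rw [map_mul, Complex.conj_ofReal, ← Complex.exp_conj]
      have : (starRingEnd ℂ)
          (-2 * (Real.pi : ℂ) * Complex.I * ((k : ℕ) : ℂ) * ((m : ℕ) : ℂ) / (N : ℂ)) =
          2 * (Real.pi : ℂ) * Complex.I * ((k : ℕ) : ℂ) * ((m : ℕ) : ℂ) / (N : ℂ) := by
        simp [map_div₀, Complex.conj_I, map_ofNat]
      rw [this]
      congr 1
      exact (exp_neg_eq_of_add_mod N hN (σ k : ℕ) (k : ℕ) (m : ℕ) (hmod k)).symm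
    rw [he1, he2]
  have hSim : S.im = 0 := Complex.conj_eq_iff_im.mp hSconj
  have : ((1 / (N : ℂ)) * S).im = 0 := by
    have h1 : (1 / (N : ℂ)) = ((1 / N : ℝ) : ℂ) := by push_cast; ring
    rw [h1]
    simp [Complex.mul_im, hSim]
  exact this
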